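/- For k ∈ (0,1) define the dimensionless quarter period T̂₄(k) = ∫_0^{√(1−k)} (1 − r²) / √( (1 − r²)² − k² ) dr. Then T̂₄ is monotonically increasing on (0,1), and T̂₄(k) ≥ 1 for all k ∈ (0,1) (the value 1 being the limit of T̂₄(k) as k → 0⁺). -/

import Mathlib

open Real

namespace QP19
open Set intervalIntegral MeasureTheory

noncomputable def B (k θ : ℝ) : ℝ := 2*k + (1-k)*Real.cos θ^2
noncomputable def Fd (k θ : ℝ) : ℝ :=
  (k * B k θ + 2*k - (B k θ)^2) / (2*(1-k) * (B k θ * Real.sqrt (B k θ)))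

variable {k : ℝ}

lemma B_ge (hk : 0 < k) (hk1 : k < 1) (θ : ℝ) : 2*k ≤ B k θ := by
  have h : (0:ℝ) ≤ 1-k := by linarith
  have : 0 ≤ (1-k)*Real.cos θ^2 := by positivity
  unfold B; linarith

lemma B_pos (hk : 0 < k) (hk1 : k < 1) (θ : ℝ) : 0 < B k θ :=
  lt_of_lt_of_le (by linarith) (B_ge hk hk1 θ)

lemma B_le (hk : 0 < k) (hk1 : k < 1) (θ : ℝ) : B k θ ≤ 3 := by
  have h : (0:ℝ) ≤ 1-k := by linarith
  have h2 : Real.cos θ^2 ≤ 1 := by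
    have := Real.neg_one_le_cos θ; have := Real.cos_le_one θ; nlinarith
  have : (1-k)*Real.cos θ^2 ≤ 1 := by nlinarith
  unfold B; linarith

lemma continuous_B (k : ℝ) : Continuous (B k) := by
  unfold B; continuity

lemma continuous_g (hk : 0 < k) (hk1 : k < 1) :
    Continuous (fun θ => Real.sqrt (B k θ) - k / Real.sqrt (B k θ)) := by
  have h1 : Continuous fun θ => Real.sqrt (B k θ) := (continuous_B k).sqrt
  exact h1.sub (continuous_const.div h1
    (fun θ => (Real.sqrt_pos.2 (B_pos hk hk1 θ)).ne'))

lemma continuous_Fd (hk : 0 < k) (hk1 : k < 1) : Continuous (Fd k) := by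
  have h1 : Continuous fun θ => Real.sqrt (B k θ) := (continuous_B k).sqrt
  apply Continuous.div
  · exact ((continuous_const.mul (continuous_B k)).add continuous_const).sub
      ((continuous_B k).pow 2)
  · exact continuous_const.mul ((continuous_B k).mul h1)
  · intro θ
    have h2 := B_pos hk hk1 θ
    have h3 : 0 < Real.sqrt (B k θ) := Real.sqrt_pos.2 h2
    have h4 : (0:ℝ) < 1 - k := by linarith
    positivity

lemma continuous_aux (hk : 0 < k) (hk1 : k < 1) :
    Continuous (fun θ => (k/2)*Real.cos θ^2/(B k θ*Real.sqrt (B k θ))) := by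
  have h1 : Continuous fun θ => Real.sqrt (B k θ) := (continuous_B k).sqrt
  apply Continuous.div
  · continuity
  · exact (continuous_B k).mul h1
  · intro θ
    have h2 := B_pos hk hk1 θ
    have h3 : 0 < Real.sqrt (B k θ) := Real.sqrt_pos.2 h2
    positivity

lemma hasDerivAt_g (hk : 0 < k) (hk1 : k < 1) (θ : ℝ) :
    HasDerivAt (fun x => Real.sqrt (B x θ) - x / Real.sqrt (B x θ)) (Fd k θ) k := by
  have hBpos := B_pos hk hk1 θ
  have hb : 0 < Real.sqrt (B k θ) := Real.sqrt_pos.2 hBpos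
  have hB : HasDerivAt (fun x => B x θ) (2 - Real.cos θ^2) k := by
    have h1 : HasDerivAt (fun x:ℝ => 2*x) 2 k := by
      simpa using (hasDerivAt_id k).const_mul (2:ℝ)
    have h2 : HasDerivAt (fun x:ℝ => (1-x)*Real.cos θ^2) (-(Real.cos θ^2)) k := by
      simpa using ((hasDerivAt_id k).const_sub (1:ℝ)).mul_const (Real.cos θ^2)
    have := h1.add h2
    unfold B
    exact this.congr_deriv (by ring)
  have hsq := hB.sqrt hBpos.ne'
  have hdiv := (hasDerivAt_id k).div hsq hb.ne'
  have h := hsq.sub hdiv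
  refine h.congr_deriv (Eq.symm ?_)
  have hb2 : Real.sqrt (B k θ) ^ 2 = B k θ := Real.sq_sqrt hBpos.le
  have hP : (1-k)*(2 - Real.cos θ^2) = 2 - B k θ := by unfold B; ring
  have h1k : (1:ℝ)-k ≠ 0 := by linarith
  unfold Fd
  simp only [id]
  have hc : Real.cos θ ^ 2 = (B k θ - 2*k)/(1-k) := by unfold B; field_simp; ring
  rw [hc]
  set s := Real.sqrt (B k θ) with hs
  rw [← hb2]
  field_simp
  ring

lemma hasDerivAt_phi (hk : 0 < k) (hk1 : k < 1) (θ : ℝ) :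
    HasDerivAt (fun t => Real.sin t * Real.cos t / (2*Real.sqrt (B k t)))
      ((k/2)*Real.cos θ^2/(B k θ*Real.sqrt (B k θ)) - Fd k θ) θ := by
  have hBpos := B_pos hk hk1 θ
  have hb : 0 < Real.sqrt (B k θ) := Real.sqrt_pos.2 hBpos
  have hN : HasDerivAt (fun t => Real.sin t * Real.cos t)
      (Real.cos θ * Real.cos θ + Real.sin θ * (-Real.sin θ)) θ :=
    (Real.hasDerivAt_sin θ).mul (Real.hasDerivAt_cos θ)
  have hB : HasDerivAt (fun t => B k t)
      ((1-k) * ((2:ℕ) * Real.cos θ^1 * (-Real.sin θ))) θ := by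
    unfold B
    exact (((Real.hasDerivAt_cos θ).pow 2).const_mul (1-k)).const_add (2*k)
  have hD := (hB.sqrt hBpos.ne').const_mul (2:ℝ)
  have hdiv := hN.div hD (by positivity)
  refine hdiv.congr_deriv (Eq.symm ?_)
  have hb2 : Real.sqrt (B k θ) ^ 2 = B k θ := Real.sq_sqrt hBpos.le
  have hBdef : B k θ = 2*k + (1-k)*Real.cos θ^2 := rfl
  have hs2 : Real.sin θ^2 = 1 - Real.cos θ^2 := by
    have := Real.sin_sq_add_cos_sq θ; linarith
  have h1k : (1:ℝ)-k ≠ 0 := by linarith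
  unfold Fd
  set b := Real.sqrt (B k θ) with hbdef
  rw [← hb2]
  have hbb : b^2 = 2*k + (1-k)*Real.cos θ^2 := by rw [hb2]; exact hBdef
  have hk' : k = (b^2 - Real.cos θ^2)/(2 - Real.cos θ^2) := by
    have : (0:ℝ) < 2 - Real.cos θ^2 := by nlinarith [Real.cos_sq_le_one θ]
    field_simp; linarith
  have h2c : (2:ℝ) - Real.cos θ^2 ≠ 0 := by nlinarith [Real.cos_sq_le_one θ]
  field_simp
  rw [hk']
  field_simp
  ring_nf
  rw [hs2]
  ring

lemma integral_Fd_pos (hk : 0 < k) (hk1 : k < 1) :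
    0 < ∫ θ in (0:ℝ)..(π/2), Fd k θ := by
  have haux := continuous_aux hk hk1
  have hFd := continuous_Fd hk hk1
  have hψ : ∀ θ ∈ uIcc (0:ℝ) (π/2),
      HasDerivAt (fun t => Real.sin t * Real.cos t / (2*Real.sqrt (B k t)))
        ((k/2)*Real.cos θ^2/(B k θ*Real.sqrt (B k θ)) - Fd k θ) θ :=
    fun θ _ => hasDerivAt_phi hk hk1 θ
  have hint : IntervalIntegrable
      (fun θ => (k/2)*Real.cos θ^2/(B k θ*Real.sqrt (B k θ)) - Fd k θ)
      volume 0 (π/2) := (haux.sub hFd).intervalIntegrable _ _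
  have hIBP := intervalIntegral.integral_eq_sub_of_hasDerivAt hψ hint
  rw [Real.cos_pi_div_two, Real.sin_zero] at hIBP
  simp only [mul_zero, zero_mul, zero_div] at hIBP
  -- hIBP : ∫ ψ = 0
  have hsplit : (∫ θ in (0:ℝ)..(π/2),
      ((k/2)*Real.cos θ^2/(B k θ*Real.sqrt (B k θ)) - Fd k θ))
      = (∫ θ in (0:ℝ)..(π/2), (k/2)*Real.cos θ^2/(B k θ*Real.sqrt (B k θ)))
        - ∫ θ in (0:ℝ)..(π/2), Fd k θ :=
    intervalIntegral.integral_sub (haux.intervalIntegrable _ _)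
      (hFd.intervalIntegrable _ _)
  have key : (∫ θ in (0:ℝ)..(π/2), Fd k θ)
      = ∫ θ in (0:ℝ)..(π/2), (k/2)*Real.cos θ^2/(B k θ*Real.sqrt (B k θ)) := by
    rw [hsplit] at hIBP; linarith
  rw [key]
  apply intervalIntegral_pos_of_pos_on (haux.intervalIntegrable _ _)
  · intro θ hθ
    have hc : 0 < Real.cos θ := Real.cos_pos_of_mem_Ioo ⟨by linarith [hθ.1, pi_pos], hθ.2⟩
    have h2 := B_pos hk hk1 θ
    have h3 : 0 < Real.sqrt (B k θ) := Real.sqrt_pos.2 h2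
    positivity
  · positivity


noncomputable def G (k : ℝ) : ℝ :=
  ∫ θ in (0:ℝ)..(π/2), (Real.sqrt (B k θ) - k / Real.sqrt (B k θ))

lemma norm_Fd_le {x m M : ℝ} (hm : 0 < m) (hmx : m ≤ x) (hxM : x ≤ M) (hM : M < 1) (θ : ℝ) :
    ‖Fd x θ‖ ≤ 14 / (2*(1-M) * (2*m * Real.sqrt (2*m))) := by
  have hx : 0 < x := lt_of_lt_of_le hm hmx
  have hx1 : x < 1 := lt_of_le_of_lt hxM hM
  have hB2 := B_ge hx hx1 θ
  have hB3 := B_le hx hx1 θ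
  have hBpos := B_pos hx hx1 θ
  have hs : Real.sqrt (2*m) ≤ Real.sqrt (B x θ) :=
    Real.sqrt_le_sqrt (le_trans (by linarith) hB2)
  have hspos : 0 < Real.sqrt (2*m) := Real.sqrt_pos.2 (by linarith)
  have hden : 2*(1-M) * (2*m * Real.sqrt (2*m))
      ≤ 2*(1-x) * (B x θ * Real.sqrt (B x θ)) := by
    have h1 : (0:ℝ) < 1-M := by linarith
    have h2 : 2*m * Real.sqrt (2*m) ≤ B x θ * Real.sqrt (B x θ) := by
      apply mul_le_mul (le_trans (by linarith) hB2) hs hspos.le hBpos.le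
    exact mul_le_mul (by linarith : 2*(1-M) ≤ 2*(1-x)) h2 (by positivity) (by linarith)
  have hdenpos : 0 < 2*(1-M) * (2*m * Real.sqrt (2*m)) := by
    have h1 : (0:ℝ) < 1-M := by linarith
    positivity
  have hnum : |x * B x θ + 2*x - (B x θ)^2| ≤ 14 := by
    rw [abs_le]; constructor <;> nlinarith
  unfold Fd
  rw [Real.norm_eq_abs, abs_div]
  rw [abs_of_pos (lt_of_lt_of_le hdenpos hden)]
  exact div_le_div₀ (by norm_num) hnum hdenpos hden

lemma hasDerivAt_G (hk : 0 < k) (hk1 : k < 1) :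
    HasDerivAt G (∫ θ in (0:ℝ)..(π/2), Fd k θ) k := by
  set ε := min k (1-k) / 2 with hε
  have hεpos : 0 < ε := by
    have : 0 < min k (1-k) := lt_min hk (by linarith)
    positivity
  set m := k - ε with hm
  set M := k + ε with hM
  have hmpos : 0 < m := by
    have : ε < k := by
      have h1 : min k (1-k) ≤ k := min_le_left _ _
      simp only [hε]; linarith
    simp only [hm]; linarith
  have hM1 : M < 1 := by
    have h1 : min k (1-k) ≤ 1-k := min_le_right _ _
    simp only [hM, hε]; linarith
  have hball : ∀ x ∈ Metric.ball k ε, m ≤ x ∧ x ≤ M := by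
    intro x hx
    rw [Metric.mem_ball, Real.dist_eq, abs_lt] at hx
    constructor <;> [simp only [hm]; simp only [hM]] <;> linarith [hx.1, hx.2]
  have hpos01 : ∀ x ∈ Metric.ball k ε, 0 < x ∧ x < 1 := fun x hx =>
    ⟨lt_of_lt_of_le hmpos (hball x hx).1, lt_of_le_of_lt (hball x hx).2 hM1⟩
  have main := intervalIntegral.hasDerivAt_integral_of_dominated_loc_of_deriv_le
    (F := fun x θ => Real.sqrt (B x θ) - x / Real.sqrt (B x θ))
    (F' := Fd) (x₀ := k)
    (bound := fun _ => 14 / (2*(1-M) * (2*m * Real.sqrt (2*m))))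
    (a := 0) (b := π/2) (μ := volume) (Metric.ball_mem_nhds k hεpos)
    ?_ ?_ ?_ ?_ ?_ ?_
  · exact main.2
  · filter_upwards [Metric.ball_mem_nhds k hεpos] with x hx
    exact (continuous_g (hpos01 x hx).1 (hpos01 x hx).2).aestronglyMeasurable
  · exact (continuous_g hk hk1).intervalIntegrable _ _
  · exact (continuous_Fd hk hk1).aestronglyMeasurable
  · filter_upwards with θ _ x hx
    exact norm_Fd_le hmpos (hball x hx).1 (hball x hx).2 hM1 θ
  · exact intervalIntegrable_const
  · filter_upwards with θ _ x hx
    exact hasDerivAt_g (hpos01 x hx).1 (hpos01 x hx).2 θ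


noncomputable def orig (k r : ℝ) : ℝ := (1 - r^2)/Real.sqrt ((1 - r^2)^2 - k^2)

lemma orig_integrable (hk : 0 < k) (hk1 : k < 1) :
    IntervalIntegrable (orig k) volume 0 (Real.sqrt (1-k)) := by
  set a := Real.sqrt (1-k) with hadef
  have ha2 : a^2 = 1-k := Real.sq_sqrt (by linarith)
  have hapos : 0 < a := Real.sqrt_pos.2 (by linarith)
  set C := 1/Real.sqrt (2*k*a) with hC
  have hCpos : 0 < C := by positivity
  have hbound_int : IntervalIntegrable (fun r => C * (a - r) ^ (-(1/2) : ℝ)) volume 0 a := by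
    have h1 : IntervalIntegrable (fun x : ℝ => x ^ (-(1/2) : ℝ)) volume a 0 :=
      intervalIntegrable_rpow' (by norm_num)
    have h2 := h1.comp_sub_left a
    simp only [sub_self, sub_zero] at h2
    exact h2.const_mul C
  have hmeas : AEStronglyMeasurable (orig k) (volume.restrict (Set.uIoc (0:ℝ) a)) := by
    apply Measurable.aestronglyMeasurable
    exact (measurable_const.sub (measurable_id.pow_const 2)).div
      (Real.continuous_sqrt.measurable.comp
        (((measurable_const.sub (measurable_id.pow_const 2)).pow_const 2).sub measurable_const))
  apply IntervalIntegrable.mono_fun hbound_int hmeas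
  rw [Filter.EventuallyLE, ae_restrict_iff' measurableSet_uIoc]
  refine Filter.Eventually.of_forall (fun r hr => ?_)
  rw [uIoc_of_le hapos.le] at hr
  have hr0 : 0 < r := hr.1
  have hra : r ≤ a := hr.2
  have hnn : 0 ≤ orig k r := by
    unfold orig
    have h1 : (0:ℝ) ≤ 1 - r^2 := by nlinarith
    positivity
  rw [Real.norm_eq_abs, abs_of_nonneg hnn, Real.norm_eq_abs]
  have hrhs : C * (a - r) ^ (-(1/2) : ℝ) = C / Real.sqrt (a - r) := by
    rw [Real.rpow_neg (by linarith), ← Real.sqrt_eq_rpow]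
    ring
  rcases eq_or_lt_of_le hra with heq | hlt
  · have h0 : orig k r = 0 := by
      unfold orig
      rw [heq, ha2]
      have h1 : (1 - (1-k))^2 - k^2 = 0 := by ring
      rw [h1, Real.sqrt_zero, div_zero]
    rw [h0]
    exact abs_nonneg _
  · have hD : 2*k*a*(a-r) ≤ (1 - r^2)^2 - k^2 := by
      have e1 : (1 - r^2)^2 - k^2 = (1 - r^2 - k)*(1 - r^2 + k) := by ring
      have e2 : 1 - r^2 - k = (a - r)*(a + r) := by nlinarith
      have e3 : (a-r)*a ≤ (a-r)*(a+r) := by nlinarith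
      have e4 : 2*k ≤ 1 - r^2 + k := by nlinarith
      rw [e1, e2]
      have h5 : 0 ≤ (a-r)*(a+r) := by nlinarith
      nlinarith
    have hDpos : 0 < (1 - r^2)^2 - k^2 := by
      have hf : 0 < 2*k*a*(a-r) := by
        have : 0 < a - r := by linarith
        positivity
      linarith
    have hsD : Real.sqrt (2*k*a) * Real.sqrt (a-r) ≤ Real.sqrt ((1 - r^2)^2 - k^2) := by
      rw [← Real.sqrt_mul (by positivity)]
      exact Real.sqrt_le_sqrt hD
    have hsDpos : 0 < Real.sqrt ((1 - r^2)^2 - k^2) := Real.sqrt_pos.2 hDpos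
    have h6 : orig k r ≤ 1 / Real.sqrt ((1 - r^2)^2 - k^2) := by
      unfold orig
      exact div_le_div₀ zero_le_one (by nlinarith) hsDpos le_rfl
    have h7 : 1 / Real.sqrt ((1 - r^2)^2 - k^2)
        ≤ 1 / (Real.sqrt (2*k*a) * Real.sqrt (a-r)) := by
      apply one_div_le_one_div_of_le ?_ hsD
      have : 0 < Real.sqrt (a-r) := Real.sqrt_pos.2 (by linarith)
      positivity
    rw [abs_of_nonneg, hrhs]
    · calc orig k r ≤ 1 / Real.sqrt ((1 - r^2)^2 - k^2) := h6
        _ ≤ 1 / (Real.sqrt (2*k*a) * Real.sqrt (a-r)) := h7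
        _ = C / Real.sqrt (a-r) := by rw [hC]; ring
    · have h8 : 0 ≤ (a - r) ^ (-(1/2) : ℝ) := Real.rpow_nonneg (by linarith) _
      positivity



lemma pointwise_sub (hk : 0 < k) (hk1 : k < 1) {θ : ℝ} (hθ0 : 0 ≤ θ) (hθ : θ < π/2) :
    (Real.sqrt (1-k) * Real.cos θ) • orig k (Real.sqrt (1-k) * Real.sin θ)
      = Real.sqrt (B k θ) - k / Real.sqrt (B k θ) := by
  set a := Real.sqrt (1-k) with hadef
  have ha2 : a^2 = 1-k := Real.sq_sqrt (by linarith)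
  have hapos : 0 < a := Real.sqrt_pos.2 (by linarith)
  have hc : 0 < Real.cos θ := Real.cos_pos_of_mem_Ioo ⟨by linarith [pi_pos], hθ⟩
  have hBpos := B_pos hk hk1 θ
  have hb : 0 < Real.sqrt (B k θ) := Real.sqrt_pos.2 hBpos
  have hb2 : Real.sqrt (B k θ)^2 = B k θ := Real.sq_sqrt hBpos.le
  have hs2 : Real.sin θ^2 = 1 - Real.cos θ^2 := by
    have := Real.sin_sq_add_cos_sq θ; linarith
  have hnum : 1 - (a * Real.sin θ)^2 = B k θ - k := by
    have : (a * Real.sin θ)^2 = a^2 * Real.sin θ^2 := by ring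
    rw [this, ha2, hs2]
    unfold B; ring
  have hden : (1 - (a * Real.sin θ)^2)^2 - k^2 = (a * Real.cos θ)^2 * B k θ := by
    rw [hnum]
    have : (a * Real.cos θ)^2 = (1-k) * Real.cos θ^2 := by rw [mul_pow, ha2]
    rw [this]
    unfold B; ring
  have hsq : Real.sqrt ((1 - (a * Real.sin θ)^2)^2 - k^2)
      = (a * Real.cos θ) * Real.sqrt (B k θ) := by
    rw [hden, Real.sqrt_mul (by positivity), Real.sqrt_sq (by positivity)]
  unfold orig
  rw [hsq, hnum, smul_eq_mul]
  have hac : a * Real.cos θ ≠ 0 := by positivity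
  have e2 : a * Real.cos θ * ((B k θ - k) / (a * Real.cos θ * Real.sqrt (B k θ)))
      = (B k θ - k) / Real.sqrt (B k θ) := by
    field_simp
  have e3 : (B k θ - k) / Real.sqrt (B k θ)
      = Real.sqrt (B k θ) - k / Real.sqrt (B k θ) := by
    rw [sub_div, Real.div_sqrt]
  exact e2.trans e3

lemma sub_eq (hk : 0 < k) (hk1 : k < 1) {b : ℝ} (hb0 : 0 ≤ b) (hb : b < π/2) :
    (∫ θ in (0:ℝ)..b, (Real.sqrt (B k θ) - k / Real.sqrt (B k θ)))
      = ∫ x in (0:ℝ)..(Real.sqrt (1-k) * Real.sin b), orig k x := by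
  set a := Real.sqrt (1-k) with hadef
  have ha2 : a^2 = 1-k := Real.sq_sqrt (by linarith)
  have hapos : 0 < a := Real.sqrt_pos.2 (by linarith)
  have hsb1 : Real.sin b < 1 := by
    have h := Real.strictMonoOn_sin (a := b) (b := π/2)
      ⟨by linarith [pi_pos], by linarith⟩ ⟨by linarith [pi_pos], le_refl _⟩ hb
    rwa [Real.sin_pi_div_two] at h
  have hsb0 : 0 ≤ Real.sin b := Real.sin_nonneg_of_nonneg_of_le_pi hb0 (by linarith [pi_pos])
  have himg : (fun t => a * Real.sin t) '' (uIcc 0 b) ⊆ Icc 0 (a * Real.sin b) := by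
    rintro x ⟨θ, hθ, rfl⟩
    rw [uIcc_of_le hb0] at hθ
    have h1 : 0 ≤ Real.sin θ :=
      Real.sin_nonneg_of_nonneg_of_le_pi hθ.1 (by linarith [pi_pos, hθ.2])
    have h2 : Real.sin θ ≤ Real.sin b := by
      apply Real.strictMonoOn_sin.monotoneOn
        ⟨by linarith [pi_pos, hθ.1], by linarith [hθ.2]⟩
        ⟨by linarith [pi_pos], by linarith⟩ hθ.2
    refine ⟨?_, ?_⟩
    · show (0:ℝ) ≤ a * Real.sin θ
      positivity
    · show a * Real.sin θ ≤ a * Real.sin b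
      nlinarith
  have hcont : ContinuousOn (orig k) (Icc 0 (a * Real.sin b)) := by
    apply ContinuousOn.div
    · fun_prop
    · fun_prop
    · intro x hx
      have hx2 : x^2 < a^2 := by
        rcases hx with ⟨hx0, hx1⟩
        have hxa : x < a := lt_of_le_of_lt hx1 (by nlinarith)
        nlinarith
      have h1 : k < 1 - x^2 := by rw [ha2] at hx2; linarith
      have h2 : 0 < (1 - x^2)^2 - k^2 := by nlinarith
      positivity
  have hder : ∀ θ ∈ uIcc (0:ℝ) b, HasDerivAt (fun t => a * Real.sin t) (a * Real.cos θ) θ :=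
    fun θ _ => (Real.hasDerivAt_sin θ).const_mul a
  have hder_cont : ContinuousOn (fun θ => a * Real.cos θ) (uIcc 0 b) := by fun_prop
  have hsub := intervalIntegral.integral_comp_smul_deriv' hder hder_cont
    (hcont.mono himg)
  simp only [Real.sin_zero, mul_zero] at hsub
  rw [← hsub]
  apply intervalIntegral.integral_congr
  intro θ hθ
  rw [uIcc_of_le hb0] at hθ
  exact (pointwise_sub hk hk1 hθ.1 (lt_of_le_of_lt hθ.2 hb)).symm

lemma T_eq_G (hk : 0 < k) (hk1 : k < 1) :
    (∫ r in (0:ℝ)..Real.sqrt (1 - k), orig k r) = G k := by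
  set a := Real.sqrt (1-k) with hadef
  have hapos : 0 < a := Real.sqrt_pos.2 (by linarith)
  set P : ℝ → ℝ := fun x => ∫ t in (0:ℝ)..x, orig k t with hP
  have hPcont : ContinuousOn P (uIcc 0 a) :=
    intervalIntegral.continuousOn_primitive_interval' (orig_integrable hk hk1) left_mem_uIcc
  have hQ : Continuous (fun b => ∫ θ in (0:ℝ)..b,
      (Real.sqrt (B k θ) - k / Real.sqrt (B k θ))) :=
    intervalIntegral.continuous_primitive
      (fun c d => (continuous_g hk hk1).intervalIntegrable c d) 0
  have hQt : Filter.Tendsto (fun b => ∫ θ in (0:ℝ)..b,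
      (Real.sqrt (B k θ) - k / Real.sqrt (B k θ)))
      (nhdsWithin (π/2) (Iio (π/2))) (nhds (G k)) :=
    (hQ.tendsto (π/2)).mono_left nhdsWithin_le_nhds
  have hsin_t : Filter.Tendsto (fun b => a * Real.sin b)
      (nhdsWithin (π/2) (Iio (π/2))) (nhdsWithin a (uIcc 0 a)) := by
    apply tendsto_nhdsWithin_of_tendsto_nhds_of_eventually_within
    · have : Continuous (fun b => a * Real.sin b) := by fun_prop
      have h2 := this.tendsto (π/2)
      rw [Real.sin_pi_div_two, mul_one] at h2
      exact h2.mono_left nhdsWithin_le_nhds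
    · filter_upwards [self_mem_nhdsWithin,
        eventually_nhdsWithin_of_eventually_nhds (eventually_gt_nhds (by positivity : (0:ℝ) < π/2))]
        with b hb hb0
      rw [mem_Iio] at hb
      have h1 : 0 ≤ Real.sin b := Real.sin_nonneg_of_nonneg_of_le_pi (le_of_lt hb0)
        (by linarith [pi_pos])
      have h2 : Real.sin b ≤ 1 := Real.sin_le_one b
      rw [uIcc_of_le hapos.le]
      exact ⟨by positivity, by nlinarith⟩
  have hPt : Filter.Tendsto (fun b => P (a * Real.sin b))
      (nhdsWithin (π/2) (Iio (π/2))) (nhds (P a)) :=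
    (hPcont a right_mem_uIcc).tendsto.comp hsin_t
  have hEq : ∀ᶠ b in nhdsWithin (π/2) (Iio (π/2)),
      (∫ θ in (0:ℝ)..b, (Real.sqrt (B k θ) - k / Real.sqrt (B k θ)))
        = P (a * Real.sin b) := by
    filter_upwards [self_mem_nhdsWithin,
      eventually_nhdsWithin_of_eventually_nhds (eventually_gt_nhds (by positivity : (0:ℝ) < π/2))]
      with b hb hb0
    rw [mem_Iio] at hb
    exact sub_eq hk hk1 (le_of_lt hb0) hb
  have := Filter.Tendsto.congr' hEq hQt
  exact (tendsto_nhds_unique this hPt).symm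


lemma g_le (hk : 0 < k) (hk1 : k < 1) {θ : ℝ} (hθ : θ ∈ Icc 0 (π/2)) :
    Real.sqrt (B k θ) - k / Real.sqrt (B k θ) ≤ Real.cos θ + Real.sqrt (2*k) := by
  have hc : 0 ≤ Real.cos θ := Real.cos_nonneg_of_mem_Icc ⟨by linarith [hθ.1, pi_pos], hθ.2⟩
  have hb : 0 < Real.sqrt (B k θ) := Real.sqrt_pos.2 (B_pos hk hk1 θ)
  have h1 : Real.sqrt (B k θ) - k / Real.sqrt (B k θ) ≤ Real.sqrt (B k θ) := by
    have : 0 ≤ k / Real.sqrt (B k θ) := by positivity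
    linarith
  have h2 : B k θ ≤ 2*k + Real.cos θ^2 := by
    unfold B
    nlinarith [sq_nonneg (Real.cos θ)]
  have h3 : 2*k + Real.cos θ^2 ≤ (Real.sqrt (2*k) + Real.cos θ)^2 := by
    nlinarith [Real.sq_sqrt (by linarith : (0:ℝ) ≤ 2*k), Real.sqrt_nonneg (2*k)]
  have h4 : Real.sqrt (B k θ) ≤ Real.sqrt (2*k) + Real.cos θ := by
    calc Real.sqrt (B k θ) ≤ Real.sqrt ((Real.sqrt (2*k) + Real.cos θ)^2) :=
          Real.sqrt_le_sqrt (h2.trans h3)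
      _ = Real.sqrt (2*k) + Real.cos θ := Real.sqrt_sq (by positivity)
  linarith

lemma g_ge (hk : 0 < k) (hk1 : k < 1) {θ : ℝ} (hθ : θ ∈ Icc 0 (π/2)) :
    Real.sqrt (1-k) * Real.cos θ - Real.sqrt (k/2)
      ≤ Real.sqrt (B k θ) - k / Real.sqrt (B k θ) := by
  have hc : 0 ≤ Real.cos θ := Real.cos_nonneg_of_mem_Icc ⟨by linarith [hθ.1, pi_pos], hθ.2⟩
  have hb : 0 < Real.sqrt (B k θ) := Real.sqrt_pos.2 (B_pos hk hk1 θ)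
  have h1 : Real.sqrt (1-k) * Real.cos θ ≤ Real.sqrt (B k θ) := by
    have e : Real.sqrt (1-k) * Real.cos θ = Real.sqrt ((1-k) * Real.cos θ^2) := by
      rw [Real.sqrt_mul (by linarith : (0:ℝ) ≤ 1-k), Real.sqrt_sq hc]
    rw [e]
    apply Real.sqrt_le_sqrt
    unfold B; linarith
  have h2 : k / Real.sqrt (B k θ) ≤ Real.sqrt (k/2) := by
    rw [div_le_iff₀ hb]
    have e : Real.sqrt (k/2) * Real.sqrt (2*k) = k := by
      rw [← Real.sqrt_mul (by positivity)]
      rw [show (k/2) * (2*k) = k^2 by ring, Real.sqrt_sq hk.le]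
    calc k = Real.sqrt (k/2) * Real.sqrt (2*k) := e.symm
      _ ≤ Real.sqrt (k/2) * Real.sqrt (B k θ) := by
          apply mul_le_mul_of_nonneg_left (Real.sqrt_le_sqrt (B_ge hk hk1 θ))
            (Real.sqrt_nonneg _)
  linarith

lemma G_le (hk : 0 < k) (hk1 : k < 1) : G k ≤ 1 + π/2 * Real.sqrt (2*k) := by
  have hπ : (0:ℝ) ≤ π/2 := by positivity
  have hint : (∫ θ in (0:ℝ)..(π/2), (Real.cos θ + Real.sqrt (2*k)))
      = 1 + π/2 * Real.sqrt (2*k) := by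
    rw [intervalIntegral.integral_add (Continuous.intervalIntegrable (by continuity) _ _)
      intervalIntegrable_const]
    rw [integral_cos, intervalIntegral.integral_const]
    simp [smul_eq_mul]
  rw [← hint]
  unfold G
  apply intervalIntegral.integral_mono_on hπ
    ((continuous_g hk hk1).intervalIntegrable _ _)
    (Continuous.intervalIntegrable (by continuity) _ _)
  exact fun θ hθ => g_le hk hk1 hθ

lemma G_ge (hk : 0 < k) (hk1 : k < 1) :
    Real.sqrt (1-k) - π/2 * Real.sqrt (k/2) ≤ G k := by
  have hπ : (0:ℝ) ≤ π/2 := by positivity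
  have hint : (∫ θ in (0:ℝ)..(π/2), (Real.sqrt (1-k) * Real.cos θ - Real.sqrt (k/2)))
      = Real.sqrt (1-k) - π/2 * Real.sqrt (k/2) := by
    rw [intervalIntegral.integral_sub (Continuous.intervalIntegrable (by continuity) _ _)
      intervalIntegrable_const]
    rw [intervalIntegral.integral_const_mul, integral_cos, intervalIntegral.integral_const]
    simp [smul_eq_mul]
  rw [← hint]
  unfold G
  apply intervalIntegral.integral_mono_on hπ
    (Continuous.intervalIntegrable (by continuity) _ _)
    ((continuous_g hk hk1).intervalIntegrable _ _)
  exact fun θ hθ => g_ge hk hk1 hθ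

theorem main :
    StrictMonoOn
      (fun k : ℝ => ∫ r in (0:ℝ)..Real.sqrt (1 - k),
        (1 - r ^ 2) / Real.sqrt ((1 - r ^ 2) ^ 2 - k ^ 2))
      (Set.Ioo 0 1)
    ∧ (∀ k ∈ Set.Ioo (0:ℝ) 1,
        1 ≤ ∫ r in (0:ℝ)..Real.sqrt (1 - k),
          (1 - r ^ 2) / Real.sqrt ((1 - r ^ 2) ^ 2 - k ^ 2))
    ∧ Filter.Tendsto
        (fun k : ℝ => ∫ r in (0:ℝ)..Real.sqrt (1 - k),
          (1 - r ^ 2) / Real.sqrt ((1 - r ^ 2) ^ 2 - k ^ 2))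
        (nhdsWithin 0 (Set.Ioi 0)) (nhds 1) := by
  set T : ℝ → ℝ := fun k => ∫ r in (0:ℝ)..Real.sqrt (1 - k),
    (1 - r ^ 2) / Real.sqrt ((1 - r ^ 2) ^ 2 - k ^ 2) with hT
  have hTG : ∀ k ∈ Set.Ioo (0:ℝ) 1, T k = G k := by
    intro k hk
    rw [hT]
    simp only []
    rw [← T_eq_G hk.1 hk.2]
    rfl
  have hGmono : StrictMonoOn G (Set.Ioo 0 1) := by
    apply strictMonoOn_of_deriv_pos (convex_Ioo 0 1)
    · intro x hx
      exact (hasDerivAt_G hx.1 hx.2).continuousAt.continuousWithinAt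
    · intro x hx
      rw [interior_Ioo] at hx
      rw [(hasDerivAt_G hx.1 hx.2).deriv]
      exact integral_Fd_pos hx.1 hx.2
  have hmono : StrictMonoOn T (Set.Ioo 0 1) := by
    intro x hx y hy hxy
    rw [hTG x hx, hTG y hy]
    exact hGmono hx hy hxy
  have hlim : Filter.Tendsto T (nhdsWithin 0 (Set.Ioi 0)) (nhds 1) := by
    have hev : ∀ᶠ x in nhdsWithin 0 (Set.Ioi (0:ℝ)), x ∈ Set.Ioo (0:ℝ) 1 := by
      filter_upwards [self_mem_nhdsWithin,
        eventually_nhdsWithin_of_eventually_nhds (eventually_lt_nhds (by norm_num : (0:ℝ) < 1))]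
        with x hx hx1
      exact ⟨hx, hx1⟩
    have hlow : Filter.Tendsto (fun k => Real.sqrt (1-k) - π/2 * Real.sqrt (k/2))
        (nhdsWithin 0 (Set.Ioi 0)) (nhds 1) := by
      have hcont : Continuous (fun k : ℝ => Real.sqrt (1-k) - π/2 * Real.sqrt (k/2)) := by
        continuity
      have h0 := hcont.tendsto 0
      rw [show Real.sqrt (1-(0:ℝ)) - π/2 * Real.sqrt ((0:ℝ)/2) = 1 by norm_num] at h0
      exact h0.mono_left nhdsWithin_le_nhds
    have hup : Filter.Tendsto (fun k => 1 + π/2 * Real.sqrt (2*k))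
        (nhdsWithin 0 (Set.Ioi 0)) (nhds 1) := by
      have hcont : Continuous (fun k : ℝ => 1 + π/2 * Real.sqrt (2*k)) := by continuity
      have h0 := hcont.tendsto 0
      rw [show 1 + π/2 * Real.sqrt (2*(0:ℝ)) = 1 by norm_num] at h0
      exact h0.mono_left nhdsWithin_le_nhds
    apply tendsto_of_tendsto_of_tendsto_of_le_of_le' hlow hup
    · filter_upwards [hev] with x hx
      rw [hTG x hx]
      exact G_ge hx.1 hx.2
    · filter_upwards [hev] with x hx
      rw [hTG x hx]
      exact G_le hx.1 hx.2
  refine ⟨hmono, ?_, hlim⟩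
  intro k hk
  have hev : ∀ᶠ x in nhdsWithin 0 (Set.Ioi (0:ℝ)), T x ≤ T k := by
    filter_upwards [self_mem_nhdsWithin,
      eventually_nhdsWithin_of_eventually_nhds (eventually_lt_nhds hk.1)]
      with x hx hxk
    exact le_of_lt (hmono ⟨hx, lt_trans hxk hk.2⟩ hk hxk)
  exact le_of_tendsto hlim hev


end QP19

/-- The dimensionless quarter period
`T̂₄(k) = ∫_0^{√(1−k)} (1 − r²)/√((1 − r²)² − k²) dr` is monotonically increasing on
`(0,1)` and satisfies `T̂₄(k) ≥ 1` for all `k ∈ (0,1)`, the value `1` being the limit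
of `T̂₄(k)` as `k → 0⁺`. -/
theorem quarter_period_monotone :
    StrictMonoOn
      (fun k : ℝ => ∫ r in (0:ℝ)..Real.sqrt (1 - k),
        (1 - r ^ 2) / Real.sqrt ((1 - r ^ 2) ^ 2 - k ^ 2))
      (Set.Ioo 0 1)
    ∧ (∀ k ∈ Set.Ioo (0:ℝ) 1,
        1 ≤ ∫ r in (0:ℝ)..Real.sqrt (1 - k),
          (1 - r ^ 2) / Real.sqrt ((1 - r ^ 2) ^ 2 - k ^ 2))
    ∧ Filter.Tendsto
        (fun k : ℝ => ∫ r in (0:ℝ)..Real.sqrt (1 - k),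
          (1 - r ^ 2) / Real.sqrt ((1 - r ^ 2) ^ 2 - k ^ 2))
        (nhdsWithin 0 (Set.Ioi 0)) (nhds 1) :=
  QP19.main
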